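/- Let α = p/2 for a positive integer p, λ > 0, τ ∈ (0,1), and let X be a strictly positive random variable. Let (Z₁,...,Z_p) be independent standard Gaussians independent of X. Then the gamma smart path X_τ satisfies X_τ = Σ_{i=1}^p (√τ·√(X/p) + √((1-τ)/(2λ))·Z_i)² in distribution. -/

import Mathlib

open MeasureTheory ProbabilityTheory Real Set Filter Topology

noncomputable section

open scoped ENNReal NNReal Nat

/-- Law of the Poisson–gamma mixture `Y(τ, X, λ)`: given `X = x`, draw
`K ~ Poisson(xλτ/(1-τ))`, then `Y ~ Gamma(K, λτ/(1-τ))` (`Y = 0` if `K = 0`). -/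
def mixtureLaw (lam τ : ℝ) (μX : Measure ℝ) : Measure ℝ :=
  μX.bind fun x =>
    (poissonMeasure (Real.toNNReal (x * lam * τ / (1 - τ)))).bind fun k =>
      if k = 0 then Measure.dirac 0 else gammaMeasure k (lam * τ / (1 - τ))

/-- Law of the gamma smart path `X_τ = (1-τ)·γ(α,λ) + τ·Y(τ,X,λ)`, where
`γ(α,λ)` is an independent Gamma(α,λ) random variable. -/
def smartLaw (α lam τ : ℝ) (μX : Measure ℝ) : Measure ℝ :=
  Measure.conv ((gammaMeasure α lam).map (fun y => (1 - τ) * y))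
    ((mixtureLaw lam τ μX).map (fun y => τ * y))

lemma measurable_gammaPDF' (a r : ℝ) : Measurable (gammaPDF a r) :=
  (measurable_gammaPDFReal a r).ennreal_ofReal

lemma lintegral_pi_pow {n : ℕ} (μ : Measure ℝ) [SigmaFinite μ] {f : ℝ → ℝ≥0∞}
    (hf : Measurable f) :
    ∫⁻ x : Fin n → ℝ, ∏ i, f (x i) ∂Measure.pi (fun _ => μ) = (∫⁻ z, f z ∂μ) ^ n := by
  induction n with
  | zero => simp [Measure.pi_of_empty]
  | succ n ih =>
    have hmp := (measurePreserving_piFinSuccAbove (fun _ : Fin (n+1) => μ) 0).symm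
    rw [← hmp.lintegral_comp_emb (MeasurableEquiv.measurableEmbedding _)]
    simp_rw [MeasurableEquiv.piFinSuccAbove_symm_apply, Fin.insertNthEquiv,
      Fin.prod_univ_succ, Fin.insertNth_zero, Equiv.coe_fn_mk, Fin.cons_zero, Fin.cons_succ,
      cast_eq]
    have hg : Measurable fun y : Fin n → ℝ => ∏ i, f (y i) :=
      Finset.measurable_prod _ fun i _ => hf.comp (measurable_pi_apply i)
    rw [lintegral_prod_mul hf.aemeasurable hg.aemeasurable]
    rw [ih, pow_succ, mul_comm]

lemma lap_gamma {a r t : ℝ} (ha : 0 < a) (hr : 0 < r) (ht : 0 ≤ t) :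
    ∫⁻ x, ENNReal.ofReal (rexp (-(t * x))) ∂gammaMeasure a r
      = ENNReal.ofReal ((r / (r + t)) ^ a) := by
  have hrt : 0 < r + t := by linarith
  rw [gammaMeasure, lintegral_withDensity_eq_lintegral_mul _ (measurable_gammaPDF' a r)
    (by fun_prop)]
  have hpt : ∀ x : ℝ, (gammaPDF a r * fun x => ENNReal.ofReal (rexp (-(t * x)))) x
      = ENNReal.ofReal ((r / (r + t)) ^ a) * gammaPDF a (r + t) x := by
    intro x
    rcases lt_or_ge x 0 with hx | hx
    · simp [gammaPDF_of_neg hx]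
    · rw [Pi.mul_apply, gammaPDF_of_nonneg hx, gammaPDF_of_nonneg hx,
        ← ENNReal.ofReal_mul (by positivity), ← ENNReal.ofReal_mul (by positivity)]
      congr 1
      have h1 : rexp (-(r*x)) * rexp (-(t*x)) = rexp (-((r+t)*x)) := by
        rw [← Real.exp_add]; ring_nf
      rw [div_rpow hr.le hrt.le, mul_assoc _ (rexp _), h1]
      have h2 : (0:ℝ) < (r+t) ^ a := Real.rpow_pos_of_pos hrt a
      field_simp
  simp_rw [hpt]
  rw [lintegral_const_mul _ (measurable_gammaPDF' _ _), lintegral_gammaPDF_eq_one ha hrt, mul_one]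


lemma measurable_poisson_comp {g : ℝ → ℝ≥0} (hg : Measurable g) :
    Measurable fun x => poissonMeasure (g x) := by
  apply Measure.measurable_of_measurable_coe
  intro s hs
  simp_rw [poissonMeasure, Measure.sum_apply _ hs, Measure.smul_apply, smul_eq_mul]
  apply Measurable.ennreal_tsum
  intro k
  exact ((((measurable_coe_nnreal_real.comp hg).neg.exp.mul
    ((measurable_coe_nnreal_real.comp hg).pow_const k)).div_const _).ennreal_ofReal).mul_const _

lemma measurable_K (lam τ : ℝ) :
    Measurable fun x : ℝ => (poissonMeasure (Real.toNNReal (x * lam * τ / (1 - τ)))).bind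
      (fun k => if k = 0 then Measure.dirac 0 else gammaMeasure k (lam * τ / (1 - τ))) :=
  (Measure.measurable_bind' (measurable_of_countable _)).comp
    (measurable_poisson_comp (by fun_prop))

lemma gammaMeasure_Iio_zero (a r : ℝ) : gammaMeasure a r (Iio 0) = 0 := by
  rw [gammaMeasure, withDensity_apply _ measurableSet_Iio]
  exact lintegral_gammaPDF_of_nonpos le_rfl

lemma mixK_univ {m : ℝ≥0} {r : ℝ} (hr : 0 < r) :
    ((poissonMeasure m).bind fun k => if k = 0 then Measure.dirac 0 else gammaMeasure k r)
      Set.univ = 1 := by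
  rw [Measure.bind_apply MeasurableSet.univ (measurable_of_countable _).aemeasurable]
  have h : ∀ k : ℕ, (if k = 0 then Measure.dirac (0:ℝ) else gammaMeasure k r) Set.univ = 1 := by
    intro k
    rcases Nat.eq_zero_or_pos k with hk | hk
    · simp [hk]
    · rw [if_neg hk.ne']
      have := isProbabilityMeasure_gammaMeasure (by exact_mod_cast hk : (0:ℝ) < k) hr
      exact measure_univ
  simp_rw [h]
  simp

lemma mixK_Iio {m : ℝ≥0} {r : ℝ} :
    ((poissonMeasure m).bind fun k => if k = 0 then Measure.dirac 0 else gammaMeasure k r)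
      (Iio 0) = 0 := by
  rw [Measure.bind_apply measurableSet_Iio (measurable_of_countable _).aemeasurable]
  have h : ∀ k : ℕ, (if k = 0 then Measure.dirac (0:ℝ) else gammaMeasure k r) (Iio 0) = 0 := by
    intro k
    rcases Nat.eq_zero_or_pos k with hk | hk
    · rw [if_pos hk, Measure.dirac_apply' _ measurableSet_Iio]
      simp
    · rw [if_neg hk.ne']
      exact gammaMeasure_Iio_zero _ _
  simp_rw [h]
  simp

lemma map_smul_Iio {P : Measure ℝ} {c : ℝ} (hc : 0 < c) (hP : P (Iio 0) = 0) :
    (P.map fun y => c * y) (Iio 0) = 0 := by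
  rw [Measure.map_apply (measurable_const_mul c) measurableSet_Iio]
  have : (fun y => c * y) ⁻¹' (Iio 0) = Iio 0 := by
    ext y
    simp only [mem_preimage, mem_Iio]
    constructor <;> intro h <;> nlinarith
  rw [this, hP]

lemma conv_Iio_zero {P Q : Measure ℝ} [SFinite P] [SFinite Q] [IsFiniteMeasure P]
    [IsFiniteMeasure Q] (hP : P (Iio 0) = 0) (hQ : Q (Iio 0) = 0) :
    (Measure.conv P Q) (Iio 0) = 0 := by
  rw [Measure.conv, Measure.map_apply measurable_add measurableSet_Iio]
  have hsub : (fun p : ℝ × ℝ => p.1 + p.2) ⁻¹' (Iio 0) ⊆ (Iio 0 ×ˢ univ) ∪ (univ ×ˢ Iio 0) := by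
    intro q hq
    simp only [mem_preimage, mem_Iio] at hq
    rcases lt_or_ge q.1 0 with h1 | h1
    · exact Or.inl ⟨h1, mem_univ _⟩
    · exact Or.inr ⟨mem_univ _, mem_Iio.mpr (by linarith)⟩
  refine le_antisymm ?_ zero_le'
  calc (P.prod Q) ((fun p : ℝ × ℝ => p.1 + p.2) ⁻¹' (Iio 0))
      ≤ (P.prod Q) ((Iio 0 ×ˢ univ) ∪ (univ ×ˢ Iio 0)) := measure_mono hsub
    _ ≤ (P.prod Q) (Iio 0 ×ˢ univ) + (P.prod Q) (univ ×ˢ Iio 0) := measure_union_le _ _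
    _ = 0 := by rw [Measure.prod_prod, Measure.prod_prod, hP, hQ]; simp

lemma lap_map_smul (P : Measure ℝ) (c t : ℝ) :
    ∫⁻ y, ENNReal.ofReal (rexp (-(t * y))) ∂(P.map fun y => c * y)
      = ∫⁻ y, ENNReal.ofReal (rexp (-(t * c * y))) ∂P := by
  rw [lintegral_map (by fun_prop) (measurable_const_mul c)]
  congr 1 with y
  ring_nf

lemma lap_conv (P Q : Measure ℝ) [SFinite P] [SFinite Q] (t : ℝ) :
    ∫⁻ y, ENNReal.ofReal (rexp (-(t * y))) ∂(Measure.conv P Q)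
      = (∫⁻ y, ENNReal.ofReal (rexp (-(t * y))) ∂P)
        * ∫⁻ y, ENNReal.ofReal (rexp (-(t * y))) ∂Q := by
  rw [Measure.conv, lintegral_map (by fun_prop) measurable_add]
  have h : ∀ q : ℝ × ℝ, ENNReal.ofReal (rexp (-(t * (q.1 + q.2))))
      = ENNReal.ofReal (rexp (-(t * q.1))) * ENNReal.ofReal (rexp (-(t * q.2))) := by
    intro q
    rw [← ENNReal.ofReal_mul (by positivity), ← Real.exp_add]
    ring_nf
  simp_rw [h]
  exact lintegral_prod_mul (f := fun y => ENNReal.ofReal (rexp (-(t * y))))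
    (g := fun y => ENNReal.ofReal (rexp (-(t * y)))) (by fun_prop) (by fun_prop)


/-- Laplace transform of the Poisson–Gamma compound. -/
lemma lap_mix {m : ℝ≥0} {r t : ℝ} (hr : 0 < r) (ht : 0 ≤ t) :
    ∫⁻ y, ENNReal.ofReal (rexp (-(t * y)))
        ∂((poissonMeasure m).bind fun k => if k = 0 then Measure.dirac 0 else gammaMeasure k r)
      = ENNReal.ofReal (rexp (-((m : ℝ) * (t / (r + t))))) := by
  have hrt : 0 < r + t := by linarith
  set s : ℝ := r / (r + t) with hs
  have hs0 : 0 ≤ s := by positivity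
  have hs1 : s ≤ 1 := by rw [hs, div_le_one hrt]; linarith
  rw [Measure.lintegral_bind (measurable_of_countable _).aemeasurable (by fun_prop)]
  have hin : ∀ k : ℕ, ∫⁻ y, ENNReal.ofReal (rexp (-(t * y)))
      ∂(if k = 0 then Measure.dirac 0 else gammaMeasure k r) = ENNReal.ofReal (s ^ k) := by
    intro k
    rcases Nat.eq_zero_or_pos k with hk | hk
    · subst hk
      rw [if_pos rfl, lintegral_dirac' _ (by fun_prop)]
      simp
    · rw [if_neg hk.ne', lap_gamma (by exact_mod_cast hk) hr ht,
        ← Real.rpow_natCast s k]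
  simp_rw [hin]
  rw [lintegral_countable' fun k => ENNReal.ofReal (s ^ k)]
  have hpm : ∀ k : ℕ, (poissonMeasure m) {k} = ENNReal.ofReal (poissonPMFReal m k) := by
    intro k
    rw [poissonMeasure_singleton]
    rfl
  simp_rw [hpm]
  rw [tsum_congr fun k => (ENNReal.ofReal_mul (by positivity : (0:ℝ) ≤ s ^ k)).symm]
  have hsummand : ∀ k : ℕ, s ^ k * poissonPMFReal m k
      = rexp (-(m : ℝ)) * ((s * m) ^ k / k !) := by
    intro k
    rw [poissonPMFReal, mul_pow]
    ring
  simp_rw [hsummand]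
  have hsum : HasSum (fun k : ℕ => (s * (m:ℝ)) ^ k / k !) (rexp (s * m)) := by
    rw [Real.exp_eq_exp_ℝ]
    exact NormedSpace.expSeries_div_hasSum_exp (s * (m:ℝ))
  rw [← ENNReal.ofReal_tsum_of_nonneg (fun k => by positivity)
    ((hsum.summable).mul_left _)]
  rw [(hsum.mul_left _).tsum_eq]
  congr 1
  rw [← Real.exp_add]
  congr 1
  have : (1 : ℝ) - s = t / (r + t) := by
    rw [hs]; field_simp; ring
  rw [← this]; ring


lemma lap_gauss {a c t : ℝ} (ht : 0 ≤ t) :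
    ∫⁻ z, ENNReal.ofReal (rexp (-(t * (a + c * z) ^ 2))) ∂gaussianReal 0 1
      = ENNReal.ofReal ((1 + 2 * t * c ^ 2)⁻¹ ^ ((1:ℝ)/2)
          * rexp (-(t * a ^ 2 / (1 + 2 * t * c ^ 2)))) := by
  set β : ℝ := 1 + 2 * t * c ^ 2 with hβ
  have hβ0 : 0 < β := by positivity
  set v : ℝ≥0 := (β⁻¹).toNNReal with hvdef
  have hv : (v : ℝ) = β⁻¹ := Real.coe_toNNReal _ (by positivity)
  have hv0 : v ≠ 0 := by
    rw [← NNReal.coe_ne_zero, hv]; positivity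
  set mμ : ℝ := -(2 * t * a * c / β) with hm
  set C : ℝ := β⁻¹ ^ ((1:ℝ)/2) * rexp (-(t * a ^ 2 / β)) with hC
  have key : ∀ z : ℝ, gaussianPDFReal 0 1 z * rexp (-(t * (a + c * z) ^ 2))
      = C * gaussianPDFReal mμ v z := by
    intro z
    rw [gaussianPDFReal, gaussianPDFReal, hv, hC]
    rw [mul_assoc _ (rexp _) (rexp _), ← Real.exp_add, mul_mul_mul_comm, ← Real.exp_add]
    have hsqrt : β⁻¹ ^ ((1:ℝ)/2) * (√(2 * π * β⁻¹))⁻¹ = (√(2 * π * (1:ℝ≥0)))⁻¹ := by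
      rw [← Real.sqrt_eq_rpow, Real.sqrt_mul (by positivity : (0:ℝ) ≤ 2 * π)]
      have h1 : (0:ℝ) < √(2 * π) := Real.sqrt_pos.mpr (by positivity)
      have h2 : (0:ℝ) < √β⁻¹ := Real.sqrt_pos.mpr (by positivity)
      rw [NNReal.coe_one, mul_one]
      field_simp
    rw [hsqrt]
    congr 1
    have hβne : β ≠ 0 := hβ0.ne'
    rw [NNReal.coe_one, hm]
    congr 1
    rw [hβ]
    field_simp
    ring
  rw [gaussianReal_of_var_ne_zero 0 one_ne_zero,
    lintegral_withDensity_eq_lintegral_mul _ (measurable_gaussianPDF 0 1) (by fun_prop)]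
  have hpt : ∀ z : ℝ, (gaussianPDF 0 1 * fun z => ENNReal.ofReal (rexp (-(t * (a + c * z) ^ 2)))) z
      = ENNReal.ofReal C * gaussianPDF mμ v z := by
    intro z
    rw [Pi.mul_apply, gaussianPDF, gaussianPDF,
      ← ENNReal.ofReal_mul (gaussianPDFReal_nonneg _ _ _), key z,
      ENNReal.ofReal_mul (by rw [hC]; positivity)]
  simp_rw [hpt]
  rw [lintegral_const_mul _ (measurable_gaussianPDF _ _), lintegral_gaussianPDF_eq_one mμ hv0,
    mul_one]


lemma ae_pos_of_Iic {μX : Measure ℝ} (hXpos : μX (Iic 0) = 0) : ∀ᵐ x ∂μX, 0 < x := by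
  have h : ∀ᵐ x ∂μX, x ∉ Iic 0 := measure_eq_zero_iff_ae_notMem.mp hXpos
  filter_upwards [h] with x hx
  simpa [not_le] using hx

lemma isProbabilityMeasure_mixtureLaw {lam τ : ℝ} (hlam : 0 < lam) (hτ : τ ∈ Ioo (0:ℝ) 1)
    (μX : Measure ℝ) [IsProbabilityMeasure μX] :
    IsProbabilityMeasure (mixtureLaw lam τ μX) := by
  have hr' : 0 < lam * τ / (1 - τ) := by
    have := hτ.1; have := hτ.2
    apply div_pos (by nlinarith) (by linarith)
  constructor
  rw [mixtureLaw, Measure.bind_apply MeasurableSet.univ (measurable_K lam τ).aemeasurable]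
  simp_rw [mixK_univ hr']
  simp

lemma lap_lhs (p : ℕ) (hp : 0 < p) {lam τ t : ℝ} (hlam : 0 < lam) (hτ : τ ∈ Ioo (0:ℝ) 1)
    (ht : 0 ≤ t) (μX : Measure ℝ) [IsProbabilityMeasure μX] (hXpos : μX (Iic 0) = 0) :
    ∫⁻ y, ENNReal.ofReal (rexp (-(t * y))) ∂smartLaw ((p : ℝ)/2) lam τ μX
      = ENNReal.ofReal ((lam / (lam + t * (1 - τ))) ^ ((p:ℝ)/2))
        * ∫⁻ x, ENNReal.ofReal (rexp (-(t * τ * lam * x / (lam + t * (1 - τ))))) ∂μX := by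
  obtain ⟨hτ0, hτ1⟩ := hτ
  have h1τ : 0 < 1 - τ := by linarith
  have hr' : 0 < lam * τ / (1 - τ) := div_pos (by nlinarith) h1τ
  have hden : 0 < lam + t * (1 - τ) := by nlinarith
  haveI hPgamma : IsProbabilityMeasure (gammaMeasure ((p:ℝ)/2) lam) :=
    isProbabilityMeasure_gammaMeasure (by positivity) hlam
  haveI hPmix : IsProbabilityMeasure (mixtureLaw lam τ μX) :=
    isProbabilityMeasure_mixtureLaw hlam ⟨hτ0, hτ1⟩ μX
  haveI : IsProbabilityMeasure ((gammaMeasure ((p:ℝ)/2) lam).map fun y => (1 - τ) * y) :=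
    Measure.isProbabilityMeasure_map (measurable_const_mul _).aemeasurable
  haveI : IsProbabilityMeasure ((mixtureLaw lam τ μX).map fun y => τ * y) :=
    Measure.isProbabilityMeasure_map (measurable_const_mul _).aemeasurable
  rw [smartLaw, lap_conv, lap_map_smul, lap_map_smul,
    lap_gamma (by positivity) hlam (by positivity)]
  rw [mixtureLaw, Measure.lintegral_bind (measurable_K lam τ).aemeasurable (by fun_prop)]
  have hinner : ∀ᵐ x ∂μX,
      (∫⁻ y, ENNReal.ofReal (rexp (-(t * τ * y)))
        ∂((poissonMeasure (Real.toNNReal (x * lam * τ / (1 - τ)))).bind fun k =>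
            if k = 0 then Measure.dirac 0 else gammaMeasure k (lam * τ / (1 - τ))))
      = ENNReal.ofReal (rexp (-(t * τ * lam * x / (lam + t * (1 - τ))))) := by
    filter_upwards [ae_pos_of_Iic hXpos] with x hx
    rw [lap_mix hr' (by positivity)]
    congr 2
    rw [Real.coe_toNNReal _ (by positivity)]
    have hd2 : 0 < lam * τ / (1 - τ) + t * τ := by positivity
    field_simp
  rw [lintegral_congr_ae hinner]


lemma measurable_sumsq (p : ℕ) (lam τ : ℝ) :
    Measurable (fun q : ℝ × (Fin p → ℝ) =>
      ∑ i, (Real.sqrt τ * Real.sqrt (q.1 / p) +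
            Real.sqrt ((1 - τ) / (2 * lam)) * q.2 i) ^ 2) := by
  apply Finset.measurable_sum
  intro i _
  apply Measurable.pow_const
  exact ((measurable_const.mul ((measurable_fst.div_const _).sqrt)).add
    (measurable_const.mul ((measurable_pi_apply i).comp measurable_snd)))

lemma lap_rhs (p : ℕ) (hp : 0 < p) {lam τ t : ℝ} (hlam : 0 < lam) (hτ : τ ∈ Ioo (0:ℝ) 1)
    (ht : 0 ≤ t) (μX : Measure ℝ) [IsProbabilityMeasure μX] (hXpos : μX (Iic 0) = 0) :
    ∫⁻ y, ENNReal.ofReal (rexp (-(t * y)))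
        ∂(Measure.map
          (fun q : ℝ × (Fin p → ℝ) =>
            ∑ i, (Real.sqrt τ * Real.sqrt (q.1 / p) +
                  Real.sqrt ((1 - τ) / (2 * lam)) * q.2 i) ^ 2)
          (μX.prod (Measure.pi fun _ : Fin p => gaussianReal 0 1)))
      = ENNReal.ofReal ((lam / (lam + t * (1 - τ))) ^ ((p:ℝ)/2))
        * ∫⁻ x, ENNReal.ofReal (rexp (-(t * τ * lam * x / (lam + t * (1 - τ))))) ∂μX := by
  obtain ⟨hτ0, hτ1⟩ := hτ
  have h1τ : 0 < 1 - τ := by linarith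
  have hden : 0 < lam + t * (1 - τ) := by nlinarith
  set c : ℝ := Real.sqrt ((1 - τ) / (2 * lam)) with hc
  have hc2 : c ^ 2 = (1 - τ) / (2 * lam) := Real.sq_sqrt (by positivity)
  set A : ℝ := 1 + 2 * t * c ^ 2 with hAdef
  have hApos : 0 < A := by positivity
  have hA : A = (lam + t * (1 - τ)) / lam := by
    rw [hAdef, hc2]; field_simp
  have hAinv : A⁻¹ = lam / (lam + t * (1 - τ)) := by rw [hA, inv_div]
  rw [lintegral_map (by fun_prop) (measurable_sumsq p lam τ)]
  rw [lintegral_prod _ (by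
    apply Measurable.aemeasurable
    exact ((measurable_sumsq p lam τ).const_mul t).neg.exp.ennreal_ofReal)]
  have hexp : ∀ (x : ℝ) (z : Fin p → ℝ),
      ENNReal.ofReal (rexp (-(t * ∑ i, (Real.sqrt τ * Real.sqrt (x / p) + c * z i) ^ 2)))
        = ∏ i, ENNReal.ofReal (rexp (-(t * (Real.sqrt τ * Real.sqrt (x / p) + c * z i) ^ 2))) := by
    intro x z
    have h1 : -(t * ∑ i, (Real.sqrt τ * Real.sqrt (x / p) + c * z i) ^ 2)
        = ∑ i, -(t * (Real.sqrt τ * Real.sqrt (x / p) + c * z i) ^ 2) := by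
      rw [Finset.mul_sum, ← Finset.sum_neg_distrib]
    rw [h1, Real.exp_sum, ENNReal.ofReal_prod_of_nonneg (fun i _ => (Real.exp_pos _).le)]
  simp_rw [← hc, hexp]
  have hpi : ∀ x : ℝ,
      ∫⁻ z : Fin p → ℝ, ∏ i, ENNReal.ofReal
          (rexp (-(t * (Real.sqrt τ * Real.sqrt (x / p) + c * z i) ^ 2)))
        ∂Measure.pi (fun _ => gaussianReal 0 1)
      = (∫⁻ w, ENNReal.ofReal
          (rexp (-(t * (Real.sqrt τ * Real.sqrt (x / p) + c * w) ^ 2))) ∂gaussianReal 0 1) ^ p :=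
    fun x => lintegral_pi_pow (f := fun w => ENNReal.ofReal
      (rexp (-(t * (Real.sqrt τ * Real.sqrt (x / p) + c * w) ^ 2)))) _ (by fun_prop)
  simp_rw [hpi, lap_gauss ht]
  have hkey : ∀ᵐ x ∂μX,
      (ENNReal.ofReal (A⁻¹ ^ ((1:ℝ)/2)
        * rexp (-(t * (Real.sqrt τ * Real.sqrt (x / p)) ^ 2 / A)))) ^ p
      = ENNReal.ofReal ((lam / (lam + t * (1 - τ))) ^ ((p:ℝ)/2))
        * ENNReal.ofReal (rexp (-(t * τ * lam * x / (lam + t * (1 - τ))))) := by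
    filter_upwards [ae_pos_of_Iic hXpos] with x hx
    have ha2 : (Real.sqrt τ * Real.sqrt (x / p)) ^ 2 = τ * (x / p) := by
      rw [mul_pow, Real.sq_sqrt hτ0.le, Real.sq_sqrt (by positivity)]
    rw [← ENNReal.ofReal_pow (by positivity), ← ENNReal.ofReal_mul (by positivity)]
    congr 1
    rw [mul_pow, ← Real.rpow_natCast (A⁻¹ ^ ((1:ℝ)/2)) p,
      ← Real.rpow_mul (inv_nonneg.mpr hApos.le), ← Real.exp_nat_mul, ha2]
    congr 1
    · rw [hAinv]; congr 1; ring
    · congr 1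
      rw [hA]
      have hp0 : (p : ℝ) ≠ 0 := Nat.cast_ne_zero.mpr hp.ne'
      field_simp
  rw [lintegral_congr_ae hkey]
  rw [lintegral_const_mul _ (by fun_prop)]


lemma integral_poly_eq {R S : Measure ℝ} [IsProbabilityMeasure R] [IsProbabilityMeasure S]
    (hR : ∀ᵐ u ∂ R, u ∈ Icc (0:ℝ) 1) (hS : ∀ᵐ u ∂S, u ∈ Icc (0:ℝ) 1)
    (hmom : ∀ n : ℕ, ∫ u, u ^ n ∂ R = ∫ u, u ^ n ∂S) (q : Polynomial ℝ) :
    ∫ u, q.eval u ∂ R = ∫ u, q.eval u ∂S := by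
  have hint : ∀ (μ : Measure ℝ) [IsProbabilityMeasure μ], (∀ᵐ u ∂μ, u ∈ Icc (0:ℝ) 1) →
      ∀ i : ℕ, Integrable (fun u : ℝ => q.coeff i * u ^ i) μ := by
    intro μ _ hμ i
    apply Integrable.mono' (integrable_const (|q.coeff i|)) ((continuous_const.mul (continuous_pow i)).aestronglyMeasurable)
    filter_upwards [hμ] with u hu
    rw [Real.norm_eq_abs, Pi.mul_apply, abs_mul]
    have h1 : |u ^ i| ≤ 1 := by
      rw [abs_pow]
      apply pow_le_one₀ (abs_nonneg u)
      rw [abs_le]; exact ⟨by linarith [hu.1], hu.2⟩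
    nlinarith [abs_nonneg (q.coeff i)]
  have heval : ∀ u : ℝ, q.eval u = ∑ i ∈ Finset.range (q.natDegree + 1), q.coeff i * u ^ i :=
    fun u => Polynomial.eval_eq_sum_range u
  simp_rw [heval]
  rw [integral_finset_sum _ (fun i _ => hint R hR i), integral_finset_sum _ (fun i _ => hint S hS i)]
  refine Finset.sum_congr rfl fun i _ => ?_
  rw [integral_const_mul, integral_const_mul, hmom i]

lemma integral_eq_of_moments {R S : Measure ℝ} [IsProbabilityMeasure R] [IsProbabilityMeasure S]
    (hR : ∀ᵐ u ∂ R, u ∈ Icc (0:ℝ) 1) (hS : ∀ᵐ u ∂S, u ∈ Icc (0:ℝ) 1)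
    (hmom : ∀ n : ℕ, ∫ u, u ^ n ∂ R = ∫ u, u ^ n ∂S)
    {g : ℝ → ℝ} (hgc : Continuous g) {M : ℝ} (hbd : ∀ u, |g u| ≤ M) :
    ∫ u, g u ∂ R = ∫ u, g u ∂S := by
  have hgint : ∀ (μ : Measure ℝ) [IsProbabilityMeasure μ], Integrable g μ := by
    intro μ _
    apply Integrable.mono' (integrable_const M) hgc.aestronglyMeasurable
    exact ae_of_all _ fun u => by rw [Real.norm_eq_abs]; exact hbd u
  have hqint : ∀ (q : Polynomial ℝ) (μ : Measure ℝ) [IsProbabilityMeasure μ],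
      (∀ᵐ u ∂μ, u ∈ Icc (0:ℝ) 1) → Integrable (fun u => q.eval u) μ := by
    intro q μ _ hμ
    apply Integrable.mono' (integrable_const (∑ i ∈ Finset.range (q.natDegree + 1), |q.coeff i|))
      (q.continuous.aestronglyMeasurable)
    filter_upwards [hμ] with u hu
    rw [Real.norm_eq_abs, Polynomial.eval_eq_sum_range]
    refine (Finset.abs_sum_le_sum_abs _ _).trans (Finset.sum_le_sum fun i _ => ?_)
    rw [abs_mul]
    have h1 : |u ^ i| ≤ 1 := by
      rw [abs_pow]
      apply pow_le_one₀ (abs_nonneg u)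
      rw [abs_le]; exact ⟨by linarith [hu.1], hu.2⟩
    nlinarith [abs_nonneg (q.coeff i)]
  have key : ∀ ε : ℝ, 0 < ε → |(∫ u, g u ∂ R) - ∫ u, g u ∂S| ≤ 0 + ε := by
    intro ε hε
    obtain ⟨q, hq⟩ := exists_polynomial_near_of_continuousOn 0 1 g hgc.continuousOn (ε/2)
      (by linarith)
    have hest : ∀ (μ : Measure ℝ) [IsProbabilityMeasure μ], (∀ᵐ u ∂μ, u ∈ Icc (0:ℝ) 1) →
        |(∫ u, g u ∂μ) - ∫ u, q.eval u ∂μ| ≤ ε/2 := by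
      intro μ _ hμ
      rw [← integral_sub (hgint μ) (hqint q μ hμ)]
      have habs : |∫ u, (g u - q.eval u) ∂μ| ≤ ∫ u, |g u - q.eval u| ∂μ := by
        simpa [Real.norm_eq_abs] using
          norm_integral_le_integral_norm (μ := μ) (f := fun u => g u - q.eval u)
      refine habs.trans ?_
      have : ∫ u, |g u - q.eval u| ∂μ ≤ ∫ _, ε/2 ∂μ := by
        apply integral_mono_ae ((hgint μ).sub (hqint q μ hμ)).abs (integrable_const _)
        filter_upwards [hμ] with u hu
        have := hq u hu
        simp only [Pi.sub_apply]
        rw [abs_sub_comm]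
        linarith
      simpa using this
    have h1 := hest R hR
    have h2 := hest S hS
    have h3 := integral_poly_eq hR hS hmom q
    have h2' : |(∫ u, q.eval u ∂ R) - ∫ u, g u ∂S| ≤ ε/2 := by
      rw [h3, abs_sub_comm]; exact h2
    calc |(∫ u, g u ∂ R) - ∫ u, g u ∂S|
        ≤ |(∫ u, g u ∂ R) - ∫ u, q.eval u ∂ R|
            + |(∫ u, q.eval u ∂ R) - ∫ u, g u ∂S| := abs_sub_le _ _ _
      _ ≤ ε/2 + ε/2 := add_le_add h1 h2'
      _ = 0 + ε := by ring
  have := le_of_forall_pos_le_add key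
  have h0 : |(∫ u, g u ∂ R) - ∫ u, g u ∂S| = 0 := le_antisymm this (abs_nonneg _)
  have := abs_eq_zero.mp h0
  linarith

lemma laplace_determines (P Q : Measure ℝ) [IsProbabilityMeasure P] [IsProbabilityMeasure Q]
    (hP : P (Iio 0) = 0) (hQ : Q (Iio 0) = 0)
    (h : ∀ n : ℕ, ∫⁻ x, ENNReal.ofReal (rexp (-((n:ℝ) * x))) ∂P
        = ∫⁻ x, ENNReal.ofReal (rexp (-((n:ℝ) * x))) ∂Q) : P = Q := by
  set T : ℝ → ℝ := fun x => rexp (-x) with hT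
  have hTcont : Continuous T := Real.continuous_exp.comp continuous_neg
  have hTinj : Function.Injective T := fun a b hab => by
    have := Real.exp_injective hab; linarith
  have hTemb : MeasurableEmbedding T := hTcont.measurableEmbedding hTinj
  haveI hP'p : IsProbabilityMeasure (P.map T) :=
    Measure.isProbabilityMeasure_map hTcont.measurable.aemeasurable
  haveI hQ'p : IsProbabilityMeasure (Q.map T) :=
    Measure.isProbabilityMeasure_map hTcont.measurable.aemeasurable
  have hIcc : ∀ (R : Measure ℝ), R (Iio 0) = 0 → ∀ᵐ u ∂(R.map T), u ∈ Icc (0:ℝ) 1 := by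
    intro R hR
    rw [ae_iff]
    rw [hTemb.map_apply]
    apply measure_mono_null ?_ hR
    intro x hx
    simp only [mem_preimage, mem_setOf_eq, mem_Icc, not_and_or, not_le] at hx
    simp only [mem_Iio]
    rcases hx with hx | hx
    · exact absurd (Real.exp_pos (-x)).le (not_le.mpr hx)
    · by_contra hx0
      push_neg at hx0
      have h1 : rexp (-x) ≤ 1 := Real.exp_le_one_iff.mpr (by linarith)
      linarith
  have hmom : ∀ n : ℕ, ∫ u, u ^ n ∂(P.map T) = ∫ u, u ^ n ∂(Q.map T) := by
    intro n
    have hmeq : ∀ (R : Measure ℝ) [IsProbabilityMeasure R], ∫ u, u ^ n ∂(R.map T)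
        = (∫⁻ x, ENNReal.ofReal (rexp (-((n:ℝ) * x))) ∂ R).toReal := by
      intro R _
      rw [integral_map hTcont.measurable.aemeasurable
        ((continuous_pow n).aestronglyMeasurable)]
      have hTn : ∀ x : ℝ, (T x) ^ n = rexp (-((n:ℝ) * x)) := by
        intro x
        rw [hT, ← Real.exp_nat_mul]
        congr 1
        ring
      simp_rw [hTn]
      exact integral_eq_lintegral_of_nonneg_ae (ae_of_all _ fun x => (Real.exp_pos _).le)
        ((Real.continuous_exp.comp ((continuous_const.mul continuous_id).neg)).aestronglyMeasurable)
    rw [hmeq P, hmeq Q, h n]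
  have hPQ' : P.map T = Q.map T := by
    apply ext_of_forall_lintegral_eq_of_IsFiniteMeasure
    intro f
    have hgc : Continuous fun u => ((f u : ℝ)) := NNReal.continuous_coe.comp f.continuous
    obtain ⟨C, hC⟩ := f.bounded
    have hbd : ∀ u, |((f u : ℝ))| ≤ (f 0 : ℝ) + C := by
      intro u
      rw [abs_of_nonneg (f u).coe_nonneg]
      have h1 := hC u 0
      rw [NNReal.dist_eq] at h1
      have h2 : ((f u : ℝ)) - ((f 0 : ℝ)) ≤ |((f u : ℝ)) - ((f 0 : ℝ))| := le_abs_self _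
      linarith
    have hint : ∀ (μ : Measure ℝ) [IsProbabilityMeasure μ],
        Integrable (fun u => ((f u : ℝ))) μ := by
      intro μ _
      apply Integrable.mono' (integrable_const ((f 0 : ℝ) + C)) hgc.aestronglyMeasurable
      exact ae_of_all _ fun u => by rw [Real.norm_eq_abs]; exact hbd u
    rw [lintegral_coe_eq_integral f (hint _), lintegral_coe_eq_integral f (hint _)]
    congr 1
    exact integral_eq_of_moments (hIcc P hP) (hIcc Q hQ) hmom hgc hbd
  ext s hs
  have := congrArg (fun m : Measure ℝ => m (T '' s)) hPQ'
  simpa [hTemb.map_apply, hTinj.preimage_image] using this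

lemma mixtureLaw_Iio {lam τ : ℝ} (μX : Measure ℝ) : mixtureLaw lam τ μX (Iio 0) = 0 := by
  rw [mixtureLaw, Measure.bind_apply measurableSet_Iio (measurable_K lam τ).aemeasurable]
  simp_rw [mixK_Iio]
  simp

/-- For `α = p/2`, the gamma smart path has the distributional representation
`X_τ = Σᵢ (√τ·√(X/p) + √((1-τ)/(2λ))·Z_i)²` with `Z₁,…,Z_p` i.i.d. standard
Gaussians independent of `X`. -/
theorem smartLaw_chiSquared_rep (p : ℕ) (hp : 0 < p) (lam τ : ℝ) (hlam : 0 < lam)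
    (hτ : τ ∈ Ioo (0:ℝ) 1) (μX : Measure ℝ) [IsProbabilityMeasure μX]
    (hXpos : μX (Iic 0) = 0) :
    smartLaw ((p : ℝ) / 2) lam τ μX =
      Measure.map
        (fun q : ℝ × (Fin p → ℝ) =>
          ∑ i, (Real.sqrt τ * Real.sqrt (q.1 / p) +
                Real.sqrt ((1 - τ) / (2 * lam)) * q.2 i) ^ 2)
        (μX.prod (Measure.pi fun _ : Fin p => gaussianReal 0 1)) := by
  obtain ⟨hτ0, hτ1⟩ := hτ
  have h1τ : 0 < 1 - τ := by linarith
  haveI hPgamma : IsProbabilityMeasure (gammaMeasure ((p:ℝ)/2) lam) :=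
    isProbabilityMeasure_gammaMeasure (by positivity) hlam
  haveI hPmix : IsProbabilityMeasure (mixtureLaw lam τ μX) :=
    isProbabilityMeasure_mixtureLaw hlam ⟨hτ0, hτ1⟩ μX
  haveI : IsProbabilityMeasure ((gammaMeasure ((p:ℝ)/2) lam).map fun y => (1 - τ) * y) :=
    Measure.isProbabilityMeasure_map (measurable_const_mul _).aemeasurable
  haveI : IsProbabilityMeasure ((mixtureLaw lam τ μX).map fun y => τ * y) :=
    Measure.isProbabilityMeasure_map (measurable_const_mul _).aemeasurable
  haveI : IsProbabilityMeasure (smartLaw ((p:ℝ)/2) lam τ μX) := by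
    rw [smartLaw]; infer_instance
  haveI : IsProbabilityMeasure (Measure.map
      (fun q : ℝ × (Fin p → ℝ) =>
        ∑ i, (Real.sqrt τ * Real.sqrt (q.1 / p) +
              Real.sqrt ((1 - τ) / (2 * lam)) * q.2 i) ^ 2)
      (μX.prod (Measure.pi fun _ : Fin p => gaussianReal 0 1))) :=
    Measure.isProbabilityMeasure_map (measurable_sumsq p lam τ).aemeasurable
  apply laplace_determines
  · rw [smartLaw]
    exact conv_Iio_zero (map_smul_Iio h1τ (gammaMeasure_Iio_zero _ _))
      (map_smul_Iio hτ0 (mixtureLaw_Iio μX))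
  · rw [Measure.map_apply (measurable_sumsq p lam τ) measurableSet_Iio]
    have hempty : (fun q : ℝ × (Fin p → ℝ) =>
        ∑ i, (Real.sqrt τ * Real.sqrt (q.1 / p) +
              Real.sqrt ((1 - τ) / (2 * lam)) * q.2 i) ^ 2) ⁻¹' (Iio 0) = ∅ := by
      rw [eq_empty_iff_forall_notMem]
      intro q hq
      simp only [mem_preimage, mem_Iio] at hq
      have : (0:ℝ) ≤ ∑ i, (Real.sqrt τ * Real.sqrt (q.1 / p) +
          Real.sqrt ((1 - τ) / (2 * lam)) * q.2 i) ^ 2 :=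
        Finset.sum_nonneg fun i _ => sq_nonneg _
      linarith
    rw [hempty]
    exact measure_empty
  · intro n
    rw [lap_lhs p hp hlam ⟨hτ0, hτ1⟩ (Nat.cast_nonneg n) μX hXpos,
      lap_rhs p hp hlam ⟨hτ0, hτ1⟩ (Nat.cast_nonneg n) μX hXpos]
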